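/- Let Δx > 0, x_j ∈ ℝ, x_{j+1} := x_j + Δx, x_{j+1/2} := x_j + Δx/2, and let P_j(x) = A_j + B_j(x − x_j) + (1/2)C_j(x − x_j)² and P_{j+1}(x) = A_{j+1} + B_{j+1}(x − x_{j+1}) + (1/2)C_{j+1}(x − x_{j+1})² be quadratic polynomials. Then for every a > 0 and Δt > 0, (1/(2aΔt)) [ ∫_{x_{j+1/2} − aΔt}^{x_{j+1/2}} P_j(x) dx + ∫_{x_{j+1/2}}^{x_{j+1/2} + aΔt} P_{j+1}(x) dx ] = (A_j + A_{j+1})/2 + ((Δx − aΔt)/4)(B_j − B_{j+1}) + (Δx²/16 − aΔtΔx/8 + (aΔt)²/12)(C_j + C_{j+1}). -/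

import Mathlib

open MeasureTheory intervalIntegral

lemma quad_int (A B C c u v : ℝ) :
    (∫ x in u..v, (A + B * (x - c) + (1 / 2) * C * (x - c) ^ 2))
      = A * (v - u) + B / 2 * ((v - c) ^ 2 - (u - c) ^ 2)
        + C / 6 * ((v - c) ^ 3 - (u - c) ^ 3) := by
  have h : ∀ x ∈ Set.uIcc u v,
      HasDerivAt (fun x => A * (x - c) + B / 2 * (x - c) ^ 2 + C / 6 * (x - c) ^ 3)
        (A + B * (x - c) + (1 / 2) * C * (x - c) ^ 2) x := by
    intro x _
    have h1 : HasDerivAt (fun x : ℝ => x - c) 1 x := (hasDerivAt_id x).sub_const c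
    have := ((h1.const_mul A).add ((h1.pow 2).const_mul (B / 2))).add
        ((h1.pow 3).const_mul (C / 6))
    refine this.congr_deriv ?_
    norm_num
    ring
  rw [intervalIntegral.integral_eq_sub_of_hasDerivAt h (Continuous.intervalIntegrable (by continuity) u v)]
  ring

/-- The exact average of the piecewise-parabolic reconstruction over the
Riemann-fan control volume `[x_{j+1/2} − aΔt, x_{j+1/2} + aΔt]`. -/
theorem stmt_8 (Δx xj Aj Bj Cj Ap Bp Cp : ℝ) (hΔx : 0 < Δx)
    (Pj Pjp : ℝ → ℝ)
    (hPj : ∀ x, Pj x = Aj + Bj * (x - xj) + (1 / 2) * Cj * (x - xj) ^ 2)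
    (hPjp : ∀ x, Pjp x = Ap + Bp * (x - (xj + Δx)) + (1 / 2) * Cp * (x - (xj + Δx)) ^ 2) :
    ∀ a Δt : ℝ, 0 < a → 0 < Δt →
      (1 / (2 * a * Δt)) *
        ((∫ x in ((xj + Δx / 2) - a * Δt)..(xj + Δx / 2), Pj x)
          + ∫ x in (xj + Δx / 2)..((xj + Δx / 2) + a * Δt), Pjp x)
      = (Aj + Ap) / 2 + ((Δx - a * Δt) / 4) * (Bj - Bp)
        + (Δx ^ 2 / 16 - a * Δt * Δx / 8 + (a * Δt) ^ 2 / 12) * (Cj + Cp) := by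
  intro a Δt ha hΔt
  simp only [funext hPj, funext hPjp]
  rw [quad_int, quad_int]
  field_simp
  ring
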